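/- arXiv:2404.02671 — 2 statements merged into one kernel-verified Lean document; each statement's English description precedes it below -/
import Mathlib

section
/- Let B ~ N(0,1) and V ~ N⁺(0,τ²) (the normal distribution with mean 0 and variance τ² truncated below at zero) be independent random variables, τ > 0. Then the product VB has a Lebesgue density on ℝ that, at every t ≠ 0, is bounded above by the Lebesgue density at |t| of the Gamma distribution with shape parameter 1/2 and scale parameter τ. -/
open MeasureTheory ProbabilityTheory
open scoped ENNReal

noncomputable section

namespace BSGS

/-- Lebesgue density of the Gaussian distribution with mean `m` and variance `v`. -/
def gpdf (m v x : ℝ) : ℝ :=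
  (Real.sqrt (2 * Real.pi * v))⁻¹ * Real.exp (-(x - m) ^ 2 / (2 * v))

/-- Gaussian measure on `ℝ` with mean `m` and variance `v`. -/
def gaussianM (m v : ℝ) : Measure ℝ :=
  volume.withDensity fun x => ENNReal.ofReal (gpdf m v x)

/-- The half-normal distribution `N⁺(0, τ²)` (`τ2 = τ²` is the variance parameter):
density `(2/(τ√(2π))) e^{-v²/(2τ²)}` on `(0, ∞)`. -/
def halfNormal (τ2 : ℝ) : Measure ℝ :=
  volume.withDensity fun x =>
    Set.indicator (Set.Ioi (0 : ℝ)) (fun x => ENNReal.ofReal (2 * gpdf 0 τ2 x)) x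

/-- Lebesgue density of the Gamma distribution with shape `a` and **scale** `s`:
`x^{a-1} e^{-x/s} / (Γ(a) s^a)` on `(0, ∞)`. -/
def gammaScalePDF (a s x : ℝ) : ℝ :=
  x ^ (a - 1) * Real.exp (-x / s) / (Real.Gamma a * s ^ a)

open Real

open scoped NNReal

/-! ### Auxiliary analytic lemmas -/

lemma u_hasDeriv {m τ : ℝ} (hτ : 0 < τ) {v : ℝ} (hv : 0 < v) :
    HasDerivAt (fun v : ℝ => v / τ - m / v) (1 / τ + m / v ^ 2) v := by
  have h1 : HasDerivAt (fun v : ℝ => v / τ) (1 / τ) v := by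
    simpa using (hasDerivAt_id v).div_const τ
  have h2 : HasDerivAt (fun v : ℝ => m / v) (m * (-(v ^ 2)⁻¹)) v := by
    simpa [div_eq_mul_inv] using (hasDerivAt_inv hv.ne').const_mul m
  have := h1.sub h2
  refine this.congr_deriv ?_
  ring

lemma u_strictMono {m τ : ℝ} (hm : 0 < m) (hτ : 0 < τ) :
    StrictMonoOn (fun v : ℝ => v / τ - m / v) (Set.Ioi 0) := by
  intro a ha b hb hab
  simp only [Set.mem_Ioi] at ha hb
  have h1 : a / τ < b / τ := by gcongr
  have h2 : m / b < m / a := by gcongr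
  simp only []
  linarith

lemma integrableOn_subst {m τ : ℝ} (hm : 0 < m) (hτ : 0 < τ) :
    IntegrableOn (fun v : ℝ => (1 / τ + m / v ^ 2) * Real.exp (-(v / τ - m / v) ^ 2 / 2))
      (Set.Ioi 0) := by
  have hg : Integrable (fun x : ℝ => Real.exp (-(1/2 : ℝ) * x ^ 2)) :=
    integrable_exp_neg_mul_sq (by norm_num)
  have key := (integrableOn_image_iff_integrableOn_abs_deriv_smul (f := fun v : ℝ => v / τ - m / v)
    (f' := fun v => 1 / τ + m / v ^ 2) measurableSet_Ioi
    (fun v hv => ((u_hasDeriv hτ (Set.mem_Ioi.mp hv))).hasDerivWithinAt)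
    ((u_strictMono hm hτ).injOn) (fun x => Real.exp (-(1/2 : ℝ) * x ^ 2))).mp
    hg.integrableOn
  refine key.congr_fun (fun v hv => ?_) measurableSet_Ioi
  have hv' : (0:ℝ) < v := hv
  have hpos : 0 < 1 / τ + m / v ^ 2 := by positivity
  beta_reduce
  rw [smul_eq_mul, abs_of_pos hpos]
  ring_nf

lemma integral_subst_le {m τ : ℝ} (hm : 0 < m) (hτ : 0 < τ) :
    ∫ v in Set.Ioi (0:ℝ), (1 / τ + m / v ^ 2) * Real.exp (-(v / τ - m / v) ^ 2 / 2)
      ≤ Real.sqrt (2 * π) := by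
  have hg : Integrable (fun x : ℝ => Real.exp (-(1/2 : ℝ) * x ^ 2)) :=
    integrable_exp_neg_mul_sq (by norm_num)
  have key := integral_image_eq_integral_abs_deriv_smul (f := fun v : ℝ => v / τ - m / v)
    (f' := fun v => 1 / τ + m / v ^ 2) measurableSet_Ioi
    (fun v hv => ((u_hasDeriv hτ (Set.mem_Ioi.mp hv))).hasDerivWithinAt)
    ((u_strictMono hm hτ).injOn) (fun x => Real.exp (-(1/2 : ℝ) * x ^ 2))
  have heq : ∫ v in Set.Ioi (0:ℝ), (1 / τ + m / v ^ 2) * Real.exp (-(v / τ - m / v) ^ 2 / 2)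
      = ∫ x in (fun v : ℝ => v / τ - m / v) '' Set.Ioi 0, Real.exp (-(1/2 : ℝ) * x ^ 2) := by
    rw [key]
    refine setIntegral_congr_fun measurableSet_Ioi (fun v hv => ?_)
    have hv' : (0:ℝ) < v := hv
    have hpos : 0 < 1 / τ + m / v ^ 2 := by positivity
    rw [smul_eq_mul, abs_of_pos hpos]
    ring_nf
  rw [heq]
  calc ∫ x in (fun v : ℝ => v / τ - m / v) '' Set.Ioi 0, Real.exp (-(1/2 : ℝ) * x ^ 2)
      ≤ ∫ x : ℝ, Real.exp (-(1/2 : ℝ) * x ^ 2) := by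
        apply setIntegral_le_integral hg
        filter_upwards with x using (Real.exp_pos _).le
    _ = Real.sqrt (π / (1/2)) := integral_gaussian _
    _ = Real.sqrt (2 * π) := by norm_num [mul_comm]

lemma am_gm {m τ : ℝ} (hm : 0 < m) (hτ : 0 < τ) {v : ℝ} (hv : 0 < v) :
    2 * Real.sqrt (m / τ) ≤ v / τ + m / v := by
  have hab : (v / τ) * (m / v) = m / τ := by field_simp
  have h1 : m / τ ≤ ((v / τ + m / v) / 2) ^ 2 := by nlinarith [sq_nonneg (v / τ - m / v)]
  have h2 := Real.sqrt_le_sqrt h1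
  rw [Real.sqrt_sq (by positivity)] at h2
  linarith

lemma sqrt_mul_eq {m τ : ℝ} (hm : 0 < m) (hτ : 0 < τ) :
    τ * Real.sqrt (m / τ) = Real.sqrt (m * τ) := by
  rw [← Real.sqrt_sq hτ.le, ← Real.sqrt_mul (by positivity)]
  rw [Real.sqrt_sq hτ.le]
  congr 1
  field_simp

lemma pointwise_bound {m τ : ℝ} (hm : 0 < m) (hτ : 0 < τ) {v : ℝ} (hv : 0 < v) :
    (π * τ * v)⁻¹ * Real.exp (-(v ^ 2 / (2 * τ ^ 2)) - m ^ 2 / (2 * v ^ 2)) ≤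
      Real.exp (-(m / τ)) / (2 * π * Real.sqrt (m * τ)) *
        ((1 / τ + m / v ^ 2) * Real.exp (-(v / τ - m / v) ^ 2 / 2)) := by
  have hexp : Real.exp (-(v ^ 2 / (2 * τ ^ 2)) - m ^ 2 / (2 * v ^ 2)) =
      Real.exp (-(m / τ)) * Real.exp (-(v / τ - m / v) ^ 2 / 2) := by
    rw [← Real.exp_add]
    congr 1
    field_simp
    ring
  have hpi := Real.pi_pos
  have h1 : 2 * π * Real.sqrt (m * τ) ≤ (1 / τ + m / v ^ 2) * (π * τ * v) := by
    have he : (1 / τ + m / v ^ 2) * (π * τ * v) = π * τ * (v / τ + m / v) := by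
      field_simp
    calc 2 * π * Real.sqrt (m * τ) = π * τ * (2 * Real.sqrt (m / τ)) := by
          rw [← sqrt_mul_eq hm hτ]; ring
      _ ≤ π * τ * (v / τ + m / v) := by
          have := am_gm hm hτ hv
          have hπτ : 0 < π * τ := by positivity
          nlinarith
      _ = (1 / τ + m / v ^ 2) * (π * τ * v) := he.symm
  have hco : (π * τ * v)⁻¹ ≤ (1 / τ + m / v ^ 2) / (2 * π * Real.sqrt (m * τ)) := by
    rw [inv_eq_one_div, div_le_div_iff₀ (by positivity) (by positivity)]
    linarith
  rw [hexp]
  have hX : (0:ℝ) ≤ Real.exp (-(m / τ)) * Real.exp (-(v / τ - m / v) ^ 2 / 2) := by positivity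
  refine (mul_le_mul_of_nonneg_right hco hX).trans_eq ?_
  ring

/-- The candidate (sub-)density of the product. -/
def F (τ t : ℝ) : ℝ≥0∞ :=
  ∫⁻ v in Set.Ioi (0:ℝ),
    ENNReal.ofReal (2 * gpdf 0 (τ ^ 2) v) * gaussianPDF 0 ⟨v ^ 2, sq_nonneg v⟩ t

lemma F_le {τ : ℝ} (hτ : 0 < τ) {t : ℝ} (ht : t ≠ 0) :
    F τ t ≤ ENNReal.ofReal (gammaScalePDF (1 / 2) τ |t|) := by
  set m := |t| with hmdef
  have hm : 0 < m := abs_pos.mpr ht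
  set C : ℝ := Real.exp (-(m / τ)) / (2 * π * Real.sqrt (m * τ)) with hCdef
  have hC : 0 ≤ C := by positivity
  set ψ : ℝ → ℝ := fun v => (1 / τ + m / v ^ 2) * Real.exp (-(v / τ - m / v) ^ 2 / 2) with hψdef
  have hψ0 : ∀ v, 0 ≤ ψ v := by
    intro v
    have h1 : (0:ℝ) ≤ 1 / τ + m / v ^ 2 := by positivity
    positivity
  have hpt : ∀ v ∈ Set.Ioi (0:ℝ),
      ENNReal.ofReal (2 * gpdf 0 (τ ^ 2) v) * gaussianPDF 0 ⟨v ^ 2, sq_nonneg v⟩ t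
        ≤ ENNReal.ofReal (C * ψ v) := by
    intro v hv
    have hv' : (0:ℝ) < v := hv
    have hgnn : 0 ≤ 2 * gpdf 0 (τ ^ 2) v := by
      rw [gpdf]; positivity
    unfold gaussianPDF
    rw [← ENNReal.ofReal_mul hgnn]
    apply ENNReal.ofReal_le_ofReal
    have e1 : Real.sqrt (2 * π * τ ^ 2) = Real.sqrt (2 * π) * τ := by
      rw [Real.sqrt_mul (by positivity), Real.sqrt_sq hτ.le]
    have h2π : Real.sqrt (2 * π) * Real.sqrt (2 * π) = 2 * π :=
      Real.mul_self_sqrt (by positivity)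
    have hne : Real.sqrt (2 * π) ≠ 0 := by positivity
    have hLHS : 2 * gpdf 0 (τ ^ 2) v * gaussianPDFReal 0 ⟨v ^ 2, sq_nonneg v⟩ t
        = (π * τ * v)⁻¹ * Real.exp (-(v ^ 2 / (2 * τ ^ 2)) - m ^ 2 / (2 * v ^ 2)) := by
      show 2 * ((√(2 * π * τ ^ 2))⁻¹ * rexp (-(v - 0) ^ 2 / (2 * τ ^ 2))) *
        ((√(2 * π * v ^ 2))⁻¹ * rexp (-(t - 0) ^ 2 / (2 * v ^ 2))) = _
      rw [e1]
      rw [Real.sqrt_mul (by positivity : (0:ℝ) ≤ 2 * π), Real.sqrt_sq hv'.le]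
      have eexp : Real.exp (-(v - 0) ^ 2 / (2 * τ ^ 2)) * Real.exp (-(t - 0) ^ 2 / (2 * v ^ 2))
          = Real.exp (-(v ^ 2 / (2 * τ ^ 2)) - m ^ 2 / (2 * v ^ 2)) := by
        rw [← Real.exp_add]
        congr 1
        rw [hmdef, sq_abs]
        ring
      have hco : 2 * (Real.sqrt (2 * π) * τ)⁻¹ * (Real.sqrt (2 * π) * v)⁻¹
          = (π * τ * v)⁻¹ := by
        have hπ : π ≠ 0 := Real.pi_pos.ne'
        have h1 : (Real.sqrt (2 * π) * τ) * (Real.sqrt (2 * π) * v) = 2 * π * (τ * v) := by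
          calc (Real.sqrt (2 * π) * τ) * (Real.sqrt (2 * π) * v)
              = (Real.sqrt (2 * π) * Real.sqrt (2 * π)) * (τ * v) := by ring
            _ = 2 * π * (τ * v) := by rw [h2π]
        rw [mul_assoc, ← mul_inv, h1]
        field_simp
      rw [← eexp, ← hco]
      ring
    rw [hLHS]
    exact pointwise_bound hm hτ hv'
  have hmeas : Measurable fun v => ENNReal.ofReal (C * ψ v) := by
    apply Measurable.ennreal_ofReal
    apply Measurable.const_mul
    fun_prop
  calc F τ t ≤ ∫⁻ v in Set.Ioi (0:ℝ), ENNReal.ofReal (C * ψ v) :=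
        setLIntegral_mono hmeas hpt
    _ = ENNReal.ofReal (∫ v in Set.Ioi (0:ℝ), C * ψ v) := by
        rw [← ofReal_integral_eq_lintegral_ofReal ((integrableOn_subst hm hτ).const_mul C)
          (Filter.Eventually.of_forall fun v => mul_nonneg hC (hψ0 v))]
    _ = ENNReal.ofReal (C * ∫ v in Set.Ioi (0:ℝ), ψ v) := by rw [integral_const_mul]
    _ ≤ ENNReal.ofReal (C * Real.sqrt (2 * π)) :=
        ENNReal.ofReal_le_ofReal (mul_le_mul_of_nonneg_left (integral_subst_le hm hτ) hC)
    _ ≤ ENNReal.ofReal (gammaScalePDF (1 / 2) τ m) := by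
        apply ENNReal.ofReal_le_ofReal
        rw [gammaScalePDF, Real.Gamma_one_half_eq]
        have hτr : τ ^ ((1:ℝ)/2) = Real.sqrt τ := (Real.sqrt_eq_rpow τ).symm
        have hmr : m ^ ((1:ℝ)/2 - 1) = (Real.sqrt m)⁻¹ := by
          rw [show (1:ℝ)/2 - 1 = -(1/2) by norm_num, Real.rpow_neg hm.le,
            ← Real.sqrt_eq_rpow]
        rw [hτr, hmr, neg_div]
        have hcoef : Real.sqrt (2 * π) / (2 * π * Real.sqrt (m * τ))
            ≤ (Real.sqrt m)⁻¹ / (Real.sqrt π * Real.sqrt τ) := by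
          have hπ := Real.pi_pos
          rw [div_le_div_iff₀ (by positivity) (by positivity)]
          rw [Real.sqrt_mul (by norm_num : (0:ℝ) ≤ 2), Real.sqrt_mul hm.le]
          have hb : Real.sqrt π * Real.sqrt π = π := Real.mul_self_sqrt hπ.le
          have hc : (Real.sqrt m)⁻¹ * Real.sqrt m = 1 :=
            inv_mul_cancel₀ (by positivity)
          have ha : Real.sqrt 2 ≤ 2 := by
            nlinarith [Real.sqrt_nonneg 2, Real.sq_sqrt (show (0:ℝ) ≤ 2 by norm_num)]
          have hd : (0:ℝ) ≤ Real.sqrt τ := Real.sqrt_nonneg τ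
          have hrhs : (Real.sqrt m)⁻¹ * (2 * π * (Real.sqrt m * Real.sqrt τ))
              = 2 * (π * Real.sqrt τ) := by
            field_simp
          rw [hrhs]
          calc Real.sqrt 2 * Real.sqrt π * (Real.sqrt π * Real.sqrt τ)
              = Real.sqrt 2 * (π * Real.sqrt τ) := by
                linear_combination (Real.sqrt 2 * Real.sqrt τ) * hb
            _ ≤ 2 * (π * Real.sqrt τ) := mul_le_mul_of_nonneg_right ha (by positivity)
        calc C * Real.sqrt (2 * π)
            = Real.exp (-(m / τ)) * (Real.sqrt (2 * π) / (2 * π * Real.sqrt (m * τ))) := by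
              rw [hCdef]; ring
          _ ≤ Real.exp (-(m / τ)) * ((Real.sqrt m)⁻¹ / (Real.sqrt π * Real.sqrt τ)) :=
              mul_le_mul_of_nonneg_left hcoef (Real.exp_pos _).le
          _ = (Real.sqrt m)⁻¹ * Real.exp (-(m / τ)) / (Real.sqrt π * Real.sqrt τ) := by ring



lemma gpdf_measurable (m v : ℝ) : Measurable (gpdf m v) := by
  unfold gpdf; fun_prop

lemma meas_prod_fun (τ : ℝ) :
    Measurable fun p : ℝ × ℝ =>
      ENNReal.ofReal (2 * gpdf 0 (τ ^ 2) p.1) * gaussianPDF 0 ⟨p.1 ^ 2, sq_nonneg p.1⟩ p.2 := by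
  apply Measurable.mul (f := fun p : ℝ × ℝ => ENNReal.ofReal (2 * gpdf 0 (τ ^ 2) p.1))
    (g := fun p : ℝ × ℝ => gaussianPDF 0 ⟨p.1 ^ 2, sq_nonneg p.1⟩ p.2)
  · exact (((gpdf_measurable 0 (τ ^ 2)).const_mul 2).comp measurable_fst).ennreal_ofReal
  · unfold gaussianPDF gaussianPDFReal
    apply Measurable.ennreal_ofReal
    fun_prop

lemma map_mul_prod_eq {τ : ℝ} (hτ : 0 < τ) :
    Measure.map (fun p : ℝ × ℝ => p.1 * p.2)
        ((halfNormal (τ ^ 2)).prod (gaussianReal 0 1))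
      = volume.withDensity (F τ) := by
  set γ := gaussianReal 0 1 with hγdef
  ext s hs
  rw [Measure.map_apply (f := fun p : ℝ × ℝ => p.1 * p.2) (measurable_fst.mul measurable_snd) hs]
  have hE : MeasurableSet ((fun p : ℝ × ℝ => p.1 * p.2) ⁻¹' s) :=
    (measurable_fst.mul measurable_snd) hs
  rw [Measure.prod_apply hE, halfNormal]
  rw [lintegral_withDensity_eq_lintegral_mul _
    (((gpdf_measurable 0 (τ ^ 2)).const_mul 2).ennreal_ofReal.indicator measurableSet_Ioi)
    (measurable_measure_prodMk_left hE)]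
  have hsplit : ∀ v : ℝ,
      ((Set.Ioi (0:ℝ)).indicator (fun x => ENNReal.ofReal (2 * gpdf 0 (τ ^ 2) x)) *
        fun v => γ (Prod.mk v ⁻¹' ((fun p : ℝ × ℝ => p.1 * p.2) ⁻¹' s))) v
      = (Set.Ioi (0:ℝ)).indicator
          (fun v => ENNReal.ofReal (2 * gpdf 0 (τ ^ 2) v) *
            γ (Prod.mk v ⁻¹' ((fun p : ℝ × ℝ => p.1 * p.2) ⁻¹' s))) v := by
    intro v
    by_cases hv : v ∈ Set.Ioi (0:ℝ) <;>
      simp [Set.indicator_of_mem, Set.indicator_of_notMem, hv]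
  rw [lintegral_congr hsplit, lintegral_indicator measurableSet_Ioi _]
  have hker : ∀ v ∈ Set.Ioi (0:ℝ),
      ENNReal.ofReal (2 * gpdf 0 (τ ^ 2) v) *
          γ (Prod.mk v ⁻¹' ((fun p : ℝ × ℝ => p.1 * p.2) ⁻¹' s))
        = ∫⁻ x in s, ENNReal.ofReal (2 * gpdf 0 (τ ^ 2) v) *
            gaussianPDF 0 ⟨v ^ 2, sq_nonneg v⟩ x := by
    intro v hv
    have hv' : (0:ℝ) < v := hv
    have h1 : Prod.mk v ⁻¹' ((fun p : ℝ × ℝ => p.1 * p.2) ⁻¹' s) = (fun b => v * b) ⁻¹' s := rfl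
    have h2 : γ ((fun b => v * b) ⁻¹' s) = (γ.map (fun b => v * b)) s :=
      (Measure.map_apply (measurable_id.const_mul v) hs).symm
    have h3 : γ.map (fun b => v * b) = gaussianReal 0 ⟨v ^ 2, sq_nonneg v⟩ := by
      have h := gaussianReal_map_const_mul (μ := 0) (v := 1) v
      simp at h
      exact h
    have hvne : (⟨v ^ 2, sq_nonneg v⟩ : ℝ≥0) ≠ 0 := by
      intro h0
      have : v ^ 2 = 0 := congrArg NNReal.toReal h0
      exact hv'.ne' (pow_eq_zero_iff (n := 2) (by norm_num) |>.mp this)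
    rw [h1, h2, h3, gaussianReal_of_var_ne_zero 0 hvne, withDensity_apply _ hs]
    exact (lintegral_const_mul _ (measurable_gaussianPDF 0 _)).symm
  rw [setLIntegral_congr_fun measurableSet_Ioi hker]
  rw [lintegral_lintegral_swap (meas_prod_fun τ).aemeasurable]
  rw [withDensity_apply _ hs]
  rfl


lemma gaussianM_eq : gaussianM 0 1 = gaussianReal 0 1 := by
  rw [gaussianReal_of_var_ne_zero 0 one_ne_zero]
  unfold gaussianM gaussianPDF gaussianPDFReal gpdf
  norm_num

lemma halfNormal_ne_zero {τ : ℝ} (hτ : 0 < τ) : halfNormal (τ ^ 2) ≠ 0 := by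
  intro h0
  have h1 : halfNormal (τ ^ 2) (Set.Ioo 0 1) = 0 := by rw [h0]; simp
  rw [halfNormal, withDensity_apply _ measurableSet_Ioo] at h1
  set b : ℝ≥0∞ := ENNReal.ofReal (2 * ((Real.sqrt (2 * Real.pi * τ ^ 2))⁻¹ *
    Real.exp (-1 / (2 * τ ^ 2)))) with hbdef
  have hππ := Real.pi_pos
  have hb : 0 < b := ENNReal.ofReal_pos.mpr (by positivity)
  have hle : b * volume (Set.Ioo (0:ℝ) 1) ≤
      ∫⁻ v in Set.Ioo (0:ℝ) 1,
        (Set.Ioi (0:ℝ)).indicator (fun x => ENNReal.ofReal (2 * gpdf 0 (τ ^ 2) x)) v := by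
    rw [← setLIntegral_const]
    apply setLIntegral_mono' measurableSet_Ioo
    intro v hv
    have hv1 : (0:ℝ) < v := hv.1
    have hv2 : v < 1 := hv.2
    rw [Set.indicator_of_mem (Set.mem_Ioi.mpr hv1)]
    apply ENNReal.ofReal_le_ofReal
    rw [gpdf]
    have hexp : Real.exp (-1 / (2 * τ ^ 2)) ≤ Real.exp (-(v - 0) ^ 2 / (2 * τ ^ 2)) := by
      apply Real.exp_le_exp.mpr
      apply div_le_div_of_nonneg_right ?_ (by positivity)
      nlinarith
    have hpos : (0:ℝ) < (Real.sqrt (2 * Real.pi * τ ^ 2))⁻¹ := by positivity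
    nlinarith
  rw [h1] at hle
  simp only [Real.volume_Ioo, sub_zero, ENNReal.ofReal_one, mul_one] at hle
  exact absurd (le_antisymm hle (zero_le)) hb.ne'

/-- **Density bound for the product of a standard normal and a half-normal** (Appendix
B.3.2). If `B ~ N(0,1)` and `V ~ N⁺(0,τ²)` are independent, then `V B` has a Lebesgue
density which, at every `t ≠ 0`, is bounded above by the density of the
`Gamma(1/2, τ)` distribution (shape `1/2`, scale `τ`) evaluated at `|t|`. -/
theorem halfNormal_times_normal_density_bound
    {Ω : Type*} [MeasurableSpace Ω] (P : Measure Ω) [IsProbabilityMeasure P]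
    (B V : Ω → ℝ) (τ : ℝ) (hτ : 0 < τ)
    (hB : Measure.map B P = gaussianM 0 1)
    (hV : Measure.map V P = halfNormal (τ ^ 2))
    (hBV : IndepFun B V P) :
    ∃ d : ℝ → ℝ,
      Measure.map (fun ω => V ω * B ω) P =
        volume.withDensity (fun t => ENNReal.ofReal (d t)) ∧
      ∀ t : ℝ, t ≠ 0 → d t ≤ gammaScalePDF (1 / 2) τ |t| := by
  have hBm : AEMeasurable B P := by
    by_contra h
    rw [Measure.map_of_not_aemeasurable h] at hB
    have h1 : (0 : Measure ℝ) Set.univ = gaussianM 0 1 Set.univ := by rw [hB]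
    rw [gaussianM_eq] at h1
    simp [measure_univ] at h1
  have hVm : AEMeasurable V P := by
    by_contra h
    rw [Measure.map_of_not_aemeasurable h] at hV
    exact halfNormal_ne_zero hτ hV.symm
  have hpair : Measure.map (fun ω => (V ω, B ω)) P
      = (halfNormal (τ ^ 2)).prod (gaussianReal 0 1) := by
    rw [← hV, ← gaussianM_eq, ← hB]
    exact (indepFun_iff_map_prod_eq_prod_map_map hVm hBm).mp hBV.symm
  have hmap : Measure.map (fun ω => V ω * B ω) P = volume.withDensity (F τ) := by
    rw [← map_mul_prod_eq hτ, ← hpair]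
    exact (AEMeasurable.map_map_of_aemeasurable
      (measurable_fst.mul measurable_snd).aemeasurable (hVm.prodMk hBm)).symm
  refine ⟨fun t => min ((F τ t).toReal) (gammaScalePDF (1 / 2) τ |t|), ?_, ?_⟩
  · rw [hmap]
    apply withDensity_congr_ae
    have hae : ∀ᵐ t : ℝ, t ≠ 0 := by
      rw [ae_iff]
      have h0 : {a : ℝ | ¬ a ≠ 0} = {0} := by ext a; simp
      rw [h0]
      exact Real.volume_singleton
    filter_upwards [hae] with t ht
    have hle := F_le hτ ht
    have hΓ : (0:ℝ) < Real.Gamma (1 / 2) := Real.Gamma_pos_of_pos (by norm_num)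
    have hnn : 0 ≤ gammaScalePDF (1 / 2) τ |t| := by
      rw [gammaScalePDF]
      apply div_nonneg
      · exact mul_nonneg (Real.rpow_nonneg (abs_nonneg t) _) (Real.exp_pos _).le
      · exact mul_nonneg hΓ.le (Real.rpow_nonneg hτ.le _)
    have hne : F τ t ≠ ⊤ := (hle.trans_lt ENNReal.ofReal_lt_top).ne
    have htr : (F τ t).toReal ≤ gammaScalePDF (1 / 2) τ |t| := by
      have := ENNReal.toReal_mono ENNReal.ofReal_ne_top hle
      rwa [ENNReal.toReal_ofReal hnn] at this
    show F τ t = ENNReal.ofReal (min ((F τ t).toReal) (gammaScalePDF (1 / 2) τ |t|))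
    rw [min_eq_left htr, ENNReal.ofReal_toReal hne]
  · intro t ht
    exact min_le_right _ _


end BSGS
end
end

section
/- Consider the model y = μ + v w + u with u ~ N_T(0, σ²I_T), where μ, w ∈ ℝ^T and σ² > 0 are known, and the scalar v has prior (1−π₁)N⁺(0, τ²) + π₁δ₀ independent of u. Define η² := (w′w σ^{−2} + τ^{−2})^{−1} and ν := σ^{−2} η² w′(y − μ). Then the posterior point mass at zero is P(v = 0 | y) = π₁ / ( π₁ + 2(1−π₁)(η/τ) exp(ν²/(2η²)) Φ(ν/η) ), where Φ is the standard normal cdf, and conditional on {v > 0} the posterior distribution of v is N(ν, η²) truncated below at zero. -/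
open MeasureTheory ProbabilityTheory
open scoped ENNReal BigOperators

noncomputable section

namespace BSGS

/-- Spike-and-slab mixture `(1 - p) μ + p δ_z`. -/
def mix {E : Type*} [MeasurableSpace E] (p : ℝ) (μ : Measure E) (z : E) : Measure E :=
  ENNReal.ofReal (1 - p) • μ + ENNReal.ofReal p • Measure.dirac z

/-- Standard normal cumulative distribution function `Φ`. -/
def stdNormCDF (x : ℝ) : ℝ := ∫ t in Set.Iic x, gpdf 0 1 t

open scoped NNReal

/- ### Auxiliary lemmas -/

lemma continuous_gpdf (m v : ℝ) : Continuous (gpdf m v) := by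
  unfold gpdf; fun_prop

lemma gpdf_nonneg (m v x : ℝ) : 0 ≤ gpdf m v x := by
  unfold gpdf; positivity

lemma gpdf_pos (m : ℝ) {v : ℝ} (hv : 0 < v) (x : ℝ) : 0 < gpdf m v x := by
  unfold gpdf
  have : (0:ℝ) < 2 * Real.pi * v := by positivity
  positivity

lemma gaussianM_eq_gaussianReal (m : ℝ) {v : ℝ} (hv : 0 < v) :
    gaussianM m v = gaussianReal m (NNReal.mk v hv.le) := by
  rw [gaussianReal_of_var_ne_zero]
  · rfl
  · intro h; exact hv.ne' (congrArg NNReal.toReal h)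

lemma stdNormCDF_eq (c : ℝ) :
    gaussianReal 0 1 (Set.Iic c) = ENNReal.ofReal (stdNormCDF c) :=
  gaussianReal_apply_eq_integral 0 one_ne_zero _

lemma stdNormCDF_pos (x : ℝ) : 0 < stdNormCDF x := by
  have h2 : gaussianReal 0 1 (Set.Iic x) ≠ 0 := by
    intro h
    have := (gaussianReal_absolutelyContinuous' 0 one_ne_zero) h
    simp [Real.volume_Iic] at this
  rw [stdNormCDF_eq] at h2
  by_contra hle
  exact h2 (ENNReal.ofReal_eq_zero.2 (le_of_not_gt hle))

lemma gaussianM_Ioi (ν : ℝ) {η2 : ℝ} (h : 0 < η2) :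
    gaussianM ν η2 (Set.Ioi 0) = ENNReal.ofReal (stdNormCDF (ν / Real.sqrt η2)) := by
  set s := Real.sqrt η2 with hs_def
  have hs : 0 < s := Real.sqrt_pos.2 h
  have hvar : NNReal.mk (s ^ 2) (sq_nonneg s) * 1 = NNReal.mk η2 h.le := by
    rw [mul_one]
    exact Subtype.ext (Real.sq_sqrt h.le)
  have hmap1 : (gaussianReal 0 1).map (s * ·) = gaussianReal 0 (NNReal.mk η2 h.le) := by
    rw [gaussianReal_map_const_mul, mul_zero, hvar]
  have hmap : (gaussianReal 0 1).map (fun x => s * x + ν) = gaussianReal ν (NNReal.mk η2 h.le) := by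
    rw [show gaussianReal ν (NNReal.mk η2 h.le) = gaussianReal (0 + ν) (NNReal.mk η2 h.le) by rw [zero_add],
      ← gaussianReal_map_add_const (μ := 0) (v := NNReal.mk η2 h.le) ν, ← hmap1,
      Measure.map_map (measurable_add_const ν) (measurable_const_mul s)]
    rfl
  have hpre : (fun x => s * x + ν) ⁻¹' (Set.Ioi 0) = Set.Ioi (-(ν / s)) := by
    ext x
    simp only [Set.mem_preimage, Set.mem_Ioi]
    have hcanc : ν / s * s = ν := div_mul_cancel₀ _ hs.ne'
    constructor <;> intro h' <;> nlinarith [hcanc, hs]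
  have hneg : (gaussianReal 0 1).map (fun x : ℝ => -x) = gaussianReal 0 1 := by
    have h := gaussianReal_map_const_mul (μ := 0) (v := 1) (-1)
    have hv1 : NNReal.mk ((-1 : ℝ) ^ 2) (sq_nonneg _) * 1 = 1 := by
      rw [mul_one]; exact Subtype.ext (by norm_num)
    rw [hv1] at h
    have h2 : (fun x : ℝ => -1 * x) = (fun x : ℝ => -x) := funext fun x => by ring
    rw [h2, show (-1 : ℝ) * 0 = 0 by ring] at h
    exact h
  have hsym : gaussianReal 0 1 (Set.Ioi (-(ν / s))) = gaussianReal 0 1 (Set.Iio (ν / s)) := by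
    conv_lhs => rw [← hneg]
    rw [Measure.map_apply measurable_neg measurableSet_Ioi]
    congr 1
    ext x
    simp
  have hIic : gaussianReal 0 1 (Set.Iio (ν / s)) = gaussianReal 0 1 (Set.Iic (ν / s)) := by
    have hu : Set.Iic (ν / s) = Set.Iio (ν / s) ∪ {ν / s} := (Set.Iio_union_right).symm
    have hdisj : Disjoint (Set.Iio (ν / s)) ({ν / s} : Set ℝ) :=
      Set.disjoint_singleton_right.mpr (by simp)
    have h0 : gaussianReal 0 1 {ν / s} = 0 :=
      (gaussianReal_absolutelyContinuous 0 one_ne_zero) (measure_singleton _)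
    rw [hu, measure_union hdisj (measurableSet_singleton _), h0, add_zero]
  rw [gaussianM_eq_gaussianReal ν h, ← hmap,
    Measure.map_apply (by fun_prop) measurableSet_Ioi, hpre, hsym, hIic, stdNormCDF_eq]

lemma gpdf_complete_square {σ2 τ η2 ν S W : ℝ} (hσ2 : 0 < σ2) (hτ : 0 < τ) (hW : 0 ≤ W)
    (hη2 : η2 = (W / σ2 + (τ ^ 2)⁻¹)⁻¹) (hν : ν = η2 * S / σ2) (R v : ℝ) :
    gpdf 0 (τ ^ 2) v * Real.exp (-(R - 2 * v * S + v ^ 2 * W) / (2 * σ2)) =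
      Real.sqrt η2 / τ * Real.exp (ν ^ 2 / (2 * η2)) * Real.exp (-R / (2 * σ2)) *
        gpdf ν η2 v := by
  have hη2pos : 0 < η2 := by
    rw [hη2]
    exact inv_pos.2 (add_pos_of_nonneg_of_pos (div_nonneg hW hσ2.le) (by positivity))
  have hsqpos : 0 < Real.sqrt η2 := Real.sqrt_pos.2 hη2pos
  have hconst : (Real.sqrt (2 * Real.pi * τ ^ 2))⁻¹ =
      Real.sqrt η2 / τ * (Real.sqrt (2 * Real.pi * η2))⁻¹ := by
    rw [Real.sqrt_mul (by positivity) (τ ^ 2), Real.sqrt_mul (by positivity) η2,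
      Real.sqrt_sq hτ.le]
    have h2 : Real.sqrt (2 * Real.pi) ≠ 0 := by positivity
    field_simp
  have hexp : -(v - 0) ^ 2 / (2 * τ ^ 2) + -(R - 2 * v * S + v ^ 2 * W) / (2 * σ2) =
      ν ^ 2 / (2 * η2) + -R / (2 * σ2) + -(v - ν) ^ 2 / (2 * η2) := by
    have hinv : η2⁻¹ = W / σ2 + (τ ^ 2)⁻¹ := by rw [hη2, inv_inv]
    have hW' : W / σ2 = η2⁻¹ - (τ ^ 2)⁻¹ := by rw [hinv]; ring
    have hS' : S / σ2 = ν / η2 := by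
      rw [hν]; field_simp
    have expand : -(R - 2 * v * S + v ^ 2 * W) / (2 * σ2) =
        -R / (2 * σ2) + v * (S / σ2) - v ^ 2 / 2 * (W / σ2) := by ring
    rw [expand, hS', hW']
    ring
  calc gpdf 0 (τ ^ 2) v * Real.exp (-(R - 2 * v * S + v ^ 2 * W) / (2 * σ2))
      = (Real.sqrt (2 * Real.pi * τ ^ 2))⁻¹ *
          Real.exp (-(v - 0) ^ 2 / (2 * τ ^ 2) + -(R - 2 * v * S + v ^ 2 * W) / (2 * σ2)) := by
        rw [Real.exp_add]; simp only [gpdf]; ring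
    _ = Real.sqrt η2 / τ * (Real.sqrt (2 * Real.pi * η2))⁻¹ *
          Real.exp (ν ^ 2 / (2 * η2) + -R / (2 * σ2) + -(v - ν) ^ 2 / (2 * η2)) := by
        rw [hconst, hexp]
    _ = Real.sqrt η2 / τ * Real.exp (ν ^ 2 / (2 * η2)) * Real.exp (-R / (2 * σ2)) *
        gpdf ν η2 v := by
        rw [Real.exp_add, Real.exp_add]; simp only [gpdf]; ring

lemma enn_cancel {k p : ℝ≥0∞} (hk0 : k ≠ 0) (hktop : k ≠ ⊤) : (k * p)⁻¹ * k = p⁻¹ := by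
  rw [ENNReal.mul_inv (Or.inl hk0) (Or.inl hktop), mul_comm k⁻¹ p⁻¹, mul_assoc,
    ENNReal.inv_mul_cancel hk0 hktop, mul_one]

lemma posterior_decomp {L : ℝ → ℝ} (hLcont : Continuous L) {τ A ν η2 π1 l0 : ℝ}
    (hA : 0 ≤ A) (hl0 : L 0 = l0) (hπ1 : 0 ≤ π1) (hπlt : π1 ≤ 1)
    (key : ∀ v, 2 * gpdf 0 (τ ^ 2) v * L v = 2 * A * gpdf ν η2 v) :
    (mix π1 (halfNormal (τ ^ 2)) 0).withDensity (fun v => ENNReal.ofReal (L v)) =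
      ENNReal.ofReal ((1 - π1) * (2 * A)) • (gaussianM ν η2).restrict (Set.Ioi 0) +
        ENNReal.ofReal (π1 * l0) • Measure.dirac 0 := by
  have hfm : Measurable fun v => ENNReal.ofReal (L v) :=
    ENNReal.measurable_ofReal.comp hLcont.measurable
  have hgm : Measurable fun x : ℝ =>
      Set.indicator (Set.Ioi (0 : ℝ)) (fun x => ENNReal.ofReal (2 * gpdf 0 (τ ^ 2) x)) x :=
    Measurable.indicator
      (ENNReal.measurable_ofReal.comp
        ((continuous_const.mul (continuous_gpdf 0 (τ ^ 2))).measurable)) measurableSet_Ioi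
  have hνm : Measurable fun x : ℝ => ENNReal.ofReal (gpdf ν η2 x) :=
    ENNReal.measurable_ofReal.comp (continuous_gpdf ν η2).measurable
  rw [mix, withDensity_add_measure, withDensity_smul_measure, withDensity_smul_measure]
  congr 1
  · rw [halfNormal, ← withDensity_mul _ hgm hfm]
    have hfun : (fun x => Set.indicator (Set.Ioi (0 : ℝ))
          (fun x => ENNReal.ofReal (2 * gpdf 0 (τ ^ 2) x)) x) *
          (fun v => ENNReal.ofReal (L v)) =
        Set.indicator (Set.Ioi (0 : ℝ))
          (ENNReal.ofReal (2 * A) • fun x => ENNReal.ofReal (gpdf ν η2 x)) := by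
      funext x
      by_cases hx : x ∈ Set.Ioi (0 : ℝ)
      · simp only [Pi.mul_apply, Set.indicator_of_mem hx, Pi.smul_apply, smul_eq_mul]
        rw [← ENNReal.ofReal_mul (mul_nonneg two_pos.le (gpdf_nonneg _ _ _)),
          ← ENNReal.ofReal_mul (mul_nonneg two_pos.le hA)]
        exact congrArg ENNReal.ofReal (key x)
      · simp only [Pi.mul_apply, Set.indicator_of_notMem hx, zero_mul]
    rw [hfun, withDensity_indicator measurableSet_Ioi, withDensity_smul _ hνm,
      ← restrict_withDensity measurableSet_Ioi, smul_smul,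
      ← ENNReal.ofReal_mul (by linarith)]
    rfl
  · have h2 : (Measure.dirac (0 : ℝ)).withDensity (fun v => ENNReal.ofReal (L v)) =
        ENNReal.ofReal (L 0) • Measure.dirac 0 := by
      classical
      ext s hs
      rw [withDensity_apply _ hs, setLIntegral_dirac (fun v => ENNReal.ofReal (L v)) s,
        Measure.smul_apply, Measure.dirac_apply' _ hs, smul_eq_mul]
      by_cases h0 : (0 : ℝ) ∈ s
      · simp [h0]
      · simp [h0]
    rw [h2, smul_smul, ← ENNReal.ofReal_mul hπ1, hl0]

/-- **Conditional posterior of a scalar spike-and-slab scale** (step (b) of Algorithm 1).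
In the model `y = μ + v w + u`, `u ~ N_T(0, σ² I_T)`, with prior
`v ~ (1-π₁) N⁺(0,τ²) + π₁ δ₀`, setting `η² = (w'w σ^{-2} + τ^{-2})^{-1}` and
`ν = σ^{-2} η² w'(y - μ)`, the posterior puts mass
`π₁ / (π₁ + 2(1-π₁)(η/τ) e^{ν²/(2η²)} Φ(ν/η))` at zero, and conditionally on `{v > 0}` it is
the `N(ν, η²)` distribution truncated below at zero. -/
theorem spike_slab_scalar_posterior (T : ℕ) (μ w y : Fin T → ℝ) (σ2 τ π1 : ℝ)
    (hσ2 : 0 < σ2) (hτ : 0 < τ) (hπ1 : π1 ∈ Set.Ioo (0 : ℝ) 1)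
    (η2 ν : ℝ)
    (hη2 : η2 = ((∑ t, w t ^ 2) / σ2 + (τ ^ 2)⁻¹)⁻¹)
    (hν : ν = η2 * (∑ t, w t * (y t - μ t)) / σ2)
    (post : Measure ℝ)
    (hpost : post =
      ((((mix π1 (halfNormal (τ ^ 2)) 0).withDensity fun v =>
            ENNReal.ofReal (∏ t, gpdf (μ t + v * w t) σ2 (y t))) Set.univ)⁻¹ •
        ((mix π1 (halfNormal (τ ^ 2)) 0).withDensity fun v =>
            ENNReal.ofReal (∏ t, gpdf (μ t + v * w t) σ2 (y t))))) :
    post {0} =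
      ENNReal.ofReal (π1 /
        (π1 + 2 * (1 - π1) * (Real.sqrt η2 / τ) * Real.exp (ν ^ 2 / (2 * η2)) *
          stdNormCDF (ν / Real.sqrt η2))) ∧
    ProbabilityTheory.cond post (Set.Ioi 0) =
      ProbabilityTheory.cond (gaussianM ν η2) (Set.Ioi 0) := by
  obtain ⟨hπ0, hπlt⟩ := hπ1
  have h1π : 0 < 1 - π1 := by linarith
  have hWnn : 0 ≤ ∑ t, w t ^ 2 := Finset.sum_nonneg fun t _ => sq_nonneg _
  have hη2pos : 0 < η2 := by
    rw [hη2]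
    exact inv_pos.2 (add_pos_of_nonneg_of_pos (div_nonneg hWnn hσ2.le) (by positivity))
  have hsq : 0 < Real.sqrt η2 := Real.sqrt_pos.2 hη2pos
  -- the likelihood as a single exponential
  have hprod : ∀ v : ℝ, (∏ t, gpdf (μ t + v * w t) σ2 (y t)) =
      ((Real.sqrt (2 * Real.pi * σ2))⁻¹) ^ T *
        Real.exp (-(∑ t, (y t - μ t - v * w t) ^ 2) / (2 * σ2)) := by
    intro v
    simp only [gpdf]
    rw [Finset.prod_mul_distrib, Finset.prod_const, Finset.card_univ, Fintype.card_fin]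
    congr 1
    rw [← Real.exp_sum]
    congr 1
    have h1 : ∀ t ∈ (Finset.univ : Finset (Fin T)),
        -(y t - (μ t + v * w t)) ^ 2 / (2 * σ2) = -((y t - μ t - v * w t) ^ 2) / (2 * σ2) :=
      fun t _ => by ring
    rw [Finset.sum_congr rfl h1, ← Finset.sum_div, Finset.sum_neg_distrib]
  have hQ : ∀ v : ℝ, (∑ t, (y t - μ t - v * w t) ^ 2) =
      (∑ t, (y t - μ t) ^ 2) - 2 * v * (∑ t, w t * (y t - μ t)) +
        v ^ 2 * (∑ t, w t ^ 2) := by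
    intro v
    rw [Finset.mul_sum, Finset.mul_sum, ← Finset.sum_sub_distrib, ← Finset.sum_add_distrib]
    exact Finset.sum_congr rfl fun t _ => by ring
  set l0 : ℝ := ∏ t, gpdf (μ t + 0 * w t) σ2 (y t) with hl0_def
  have hl0pos : 0 < l0 := Finset.prod_pos fun t _ => gpdf_pos _ hσ2 _
  set A : ℝ := l0 * (Real.sqrt η2 / τ) * Real.exp (ν ^ 2 / (2 * η2)) with hA_def
  have hApos : 0 < A := by
    rw [hA_def]; positivity
  have hl0exp : l0 = ((Real.sqrt (2 * Real.pi * σ2))⁻¹) ^ T *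
      Real.exp (-(∑ t, (y t - μ t) ^ 2) / (2 * σ2)) := by
    rw [hl0_def, hprod 0, hQ 0]
    congr 2
    ring
  have key : ∀ v : ℝ, 2 * gpdf 0 (τ ^ 2) v * (∏ t, gpdf (μ t + v * w t) σ2 (y t)) =
      2 * A * gpdf ν η2 v := by
    intro v
    have hcs := gpdf_complete_square hσ2 hτ hWnn hη2 hν (∑ t, (y t - μ t) ^ 2) v
    rw [hprod v, hQ v, hA_def, hl0exp]
    linear_combination (2 * ((Real.sqrt (2 * Real.pi * σ2))⁻¹) ^ T) * hcs
  have hLcont : Continuous fun v : ℝ => ∏ t, gpdf (μ t + v * w t) σ2 (y t) :=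
    continuous_finset_prod _ fun t _ => by unfold gpdf; fun_prop
  have hm := posterior_decomp hLcont hApos.le (rfl) hπ0.le hπlt.le key
  -- abbreviations
  set Φ : ℝ := stdNormCDF (ν / Real.sqrt η2) with hΦ_def
  have hΦpos : 0 < Φ := stdNormCDF_pos _
  set a : ℝ := (1 - π1) * (2 * A) with ha_def
  set b : ℝ := π1 * l0 with hb_def
  have hapos : 0 < a := by rw [ha_def]; positivity
  have hbpos : 0 < b := by rw [hb_def]; positivity
  have hGIoi : gaussianM ν η2 (Set.Ioi 0) = ENNReal.ofReal Φ := gaussianM_Ioi ν hη2pos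
  set M : Measure ℝ := (mix π1 (halfNormal (τ ^ 2)) 0).withDensity fun v =>
      ENNReal.ofReal (∏ t, gpdf (μ t + v * w t) σ2 (y t)) with hM_def
  have hsing : ({0} : Set ℝ) ∩ Set.Ioi 0 = ∅ := by
    ext x
    simp only [Set.mem_inter_iff, Set.mem_singleton_iff, Set.mem_Ioi, Set.mem_empty_iff_false,
      iff_false, not_and]
    rintro rfl
    exact lt_irrefl 0
  have hm0 : M {0} = ENNReal.ofReal b := by
    rw [hm, Measure.add_apply, Measure.smul_apply, Measure.smul_apply,
      Measure.restrict_apply (measurableSet_singleton 0), hsing, measure_empty,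
      smul_zero, zero_add, Measure.dirac_apply' _ (measurableSet_singleton 0)]
    simp
  have hmIoi : M (Set.Ioi 0) = ENNReal.ofReal a * ENNReal.ofReal Φ := by
    rw [hm, Measure.add_apply, Measure.smul_apply, Measure.smul_apply,
      Measure.restrict_apply measurableSet_Ioi, Set.inter_self, hGIoi,
      Measure.dirac_apply' _ measurableSet_Ioi]
    simp [Set.indicator_apply]
  have hmuniv : M Set.univ = ENNReal.ofReal (a * Φ + b) := by
    rw [hm, Measure.add_apply, Measure.smul_apply, Measure.smul_apply,
      Measure.restrict_apply_univ, hGIoi, Measure.dirac_apply' _ MeasurableSet.univ]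
    simp only [Set.indicator_univ, Pi.one_apply, smul_eq_mul, mul_one]
    rw [← ENNReal.ofReal_mul hapos.le, ← ENNReal.ofReal_add (by positivity) hbpos.le]
  have hdenpos : 0 < a * Φ + b := by positivity
  have hden' : a * Φ + b = l0 * (π1 + 2 * (1 - π1) * (Real.sqrt η2 / τ) *
      Real.exp (ν ^ 2 / (2 * η2)) * Φ) := by
    rw [ha_def, hb_def, hA_def]; ring
  have hden'pos : 0 < π1 + 2 * (1 - π1) * (Real.sqrt η2 / τ) *
      Real.exp (ν ^ 2 / (2 * η2)) * Φ := by positivity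
  constructor
  · rw [hpost, Measure.smul_apply, smul_eq_mul, hmuniv, hm0,
      ← ENNReal.ofReal_inv_of_pos hdenpos,
      ← ENNReal.ofReal_mul (inv_nonneg.2 hdenpos.le)]
    congr 1
    rw [hden', hb_def]
    field_simp
  · have hdr : (Measure.dirac (0 : ℝ)).restrict (Set.Ioi 0) = 0 := by
      ext s hs
      rw [Measure.restrict_apply hs, Measure.dirac_apply' _ (hs.inter measurableSet_Ioi)]
      simp [Set.indicator_apply]
    have hMr : M.restrict (Set.Ioi 0) =
        ENNReal.ofReal a • (gaussianM ν η2).restrict (Set.Ioi 0) := by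
      rw [hm, Measure.restrict_add, Measure.restrict_smul, Measure.restrict_smul,
        Measure.restrict_restrict measurableSet_Ioi, Set.inter_self, hdr, smul_zero, add_zero]
    rw [hpost]
    unfold ProbabilityTheory.cond
    rw [Measure.restrict_smul, Measure.smul_apply, smul_eq_mul, hmuniv, hmIoi, hMr,
      smul_smul, smul_smul, hGIoi]
    congr 1
    set u : ℝ≥0∞ := ENNReal.ofReal (a * Φ + b) with hu_def
    set ca : ℝ≥0∞ := ENNReal.ofReal a with hca_def
    set p : ℝ≥0∞ := ENNReal.ofReal Φ with hp_def
    have hu0 : u ≠ 0 := (ENNReal.ofReal_pos.2 hdenpos).ne'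
    have hutop : u ≠ ⊤ := ENNReal.ofReal_ne_top
    have hca0 : ca ≠ 0 := (ENNReal.ofReal_pos.2 hapos).ne'
    have hcatop : ca ≠ ⊤ := ENNReal.ofReal_ne_top
    have hp0 : p ≠ 0 := (ENNReal.ofReal_pos.2 hΦpos).ne'
    have hptop : p ≠ ⊤ := ENNReal.ofReal_ne_top
    have hk0 : u⁻¹ * ca ≠ 0 := mul_ne_zero (ENNReal.inv_ne_zero.2 hutop) hca0
    have hktop : u⁻¹ * ca ≠ ⊤ := ENNReal.mul_ne_top (ENNReal.inv_ne_top.2 hu0) hcatop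
    rw [show (u⁻¹ * (ca * p))⁻¹ * u⁻¹ * ca = (u⁻¹ * ca * p)⁻¹ * (u⁻¹ * ca) from by
      rw [show u⁻¹ * (ca * p) = u⁻¹ * ca * p from (mul_assoc _ _ _).symm]; ring]
    exact enn_cancel hk0 hktop
end BSGS
end
end
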